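/- Let $G$ be a group and $u, v \in G$. Then for every positive integer $k$, the element $[u,v]^k$ can be written as a product of $\lfloor k/2 \rfloor + 1$ commutators. -/

import Mathlib

open Filter
open scoped commutatorElement

/-- `x` is a product of `n` commutators. -/
def IsProdComm {G : Type*} [Group G] (n : ℕ) (x : G) : Prop :=
  ∃ l : List (G × G), l.length = n ∧ x = (l.map fun p => ⁅p.1, p.2⁆).prod

/-- Commutator length: minimal number of commutators whose product is `x`. -/
noncomputable def cl {G : Type*} [Group G] (x : G) : ℕ :=
  sInf {n | IsProdComm n x}

section Aux

variable {G : Type*} [Group G]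

private lemma ipc_one (a b : G) : IsProdComm 1 (⁅a, b⁆ : G) :=
  ⟨[(a, b)], rfl, by simp⟩

private lemma ipc_mul {m n : ℕ} {x y : G} (hx : IsProdComm m x) (hy : IsProdComm n y) :
    IsProdComm (m + n) (x * y) := by
  obtain ⟨l, hl, hxe⟩ := hx
  obtain ⟨l', hl', hye⟩ := hy
  exact ⟨l ++ l', by simp [hl, hl'], by simp [hxe, hye]⟩

private lemma conj_list (t : G) (l : List (G × G)) :
    ((l.map fun p => (t * p.1 * t⁻¹, t * p.2 * t⁻¹)).map fun p => ⁅p.1, p.2⁆).prod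
      = t * (l.map fun p => ⁅p.1, p.2⁆).prod * t⁻¹ := by
  induction l with
  | nil => simp
  | cons a tl ih =>
      simp only [List.map_cons, List.prod_cons, ih]
      simp only [commutatorElement_def]
      group

private lemma ipc_conj {n : ℕ} {x : G} (t : G) (h : IsProdComm n x) :
    IsProdComm n (t * x * t⁻¹) := by
  obtain ⟨l, hl, he⟩ := h
  exact ⟨l.map fun p => (t * p.1 * t⁻¹, t * p.2 * t⁻¹), by simp [hl],
    by rw [conj_list, ← he]⟩

private lemma aux1 (u v w : G) :
    (w⁻¹ * (u * v * u⁻¹) * w⁻¹ * v⁻¹ * (w * w) : G)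
      = ⁅w⁻¹ * (u * v * u⁻¹) * w, (w * w)⁻¹ * u⁻¹ * w⁆ := by
  rw [commutatorElement_def]
  group
  rw [zpow_two]
  group

private lemma aux2 (c g v : G) (m : ℕ) :
    c ^ (2 * (m + 1) + 1)
        * ((c ^ (m + 1))⁻¹ * g * (c ^ (m + 1))⁻¹ * v⁻¹ * (c ^ (m + 1) * c ^ (m + 1)))⁻¹
      = (c * v * c * v⁻¹)
        * (c⁻¹ * (c ^ (2 * m + 1) * ((c ^ m)⁻¹ * g * (c ^ m)⁻¹ * v⁻¹ * (c ^ m * c ^ m))⁻¹)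
            * c⁻¹⁻¹) := by
  group

private lemma q_id (u v : G) : (⁅u, v * v⁆ : G) = ⁅u, v⁆ * v * ⁅u, v⁆ * v⁻¹ := by
  simp only [commutatorElement_def]
  group

private lemma key (u v : G) (m : ℕ) :
    IsProdComm m (⁅u, v⁆ ^ (2 * m + 1)
      * ((⁅u, v⁆ ^ m)⁻¹ * (u * v * u⁻¹) * (⁅u, v⁆ ^ m)⁻¹ * v⁻¹
          * (⁅u, v⁆ ^ m * ⁅u, v⁆ ^ m))⁻¹) := by
  induction m with
  | zero =>
      refine ⟨[], rfl, ?_⟩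
      simp only [List.map_nil, List.prod_nil, pow_zero, commutatorElement_def]
      group
  | succ m ih =>
      have h2 := aux2 (⁅u, v⁆ : G) (u * v * u⁻¹) v m
      rw [← q_id u v] at h2
      rw [h2]
      have := ipc_mul (ipc_one u (v * v)) (ipc_conj (⁅u, v⁆⁻¹ : G) ih)
      simpa [Nat.add_comm] using this

private lemma odd_case (u v : G) (m : ℕ) : IsProdComm (m + 1) (⁅u, v⁆ ^ (2 * m + 1)) := by
  have h := key u v m
  have h1 : IsProdComm 1
      ((⁅u, v⁆ ^ m)⁻¹ * (u * v * u⁻¹) * (⁅u, v⁆ ^ m)⁻¹ * v⁻¹ * (⁅u, v⁆ ^ m * ⁅u, v⁆ ^ m)) :=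
    ⟨[((⁅u, v⁆ ^ m)⁻¹ * (u * v * u⁻¹) * ⁅u, v⁆ ^ m,
        (⁅u, v⁆ ^ m * ⁅u, v⁆ ^ m)⁻¹ * u⁻¹ * ⁅u, v⁆ ^ m)], rfl, by
      simp only [List.map_cons, List.map_nil, List.prod_cons, List.prod_nil, mul_one]
      exact aux1 u v (⁅u, v⁆ ^ m)⟩
  have h2 := ipc_mul h h1
  simpa [mul_assoc] using h2

end Aux

theorem culler_commutator_power {G : Type*} [Group G] (u v : G) (k : ℕ) (hk : 1 ≤ k) :
    IsProdComm (k / 2 + 1) (⁅u, v⁆ ^ k) := by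
  rcases Nat.even_or_odd k with ⟨t, ht⟩ | ⟨t, ht⟩
  · -- k = t + t, t ≥ 1
    have ht1 : 1 ≤ t := by omega
    have e : (⁅u, v⁆ : G) ^ k = ⁅u, v⁆ ^ (2 * (t - 1) + 1) * ⁅u, v⁆ := by
      rw [← pow_succ]
      congr 1
      omega
    rw [show k / 2 + 1 = ((t - 1) + 1) + 1 by omega, e]
    exact ipc_mul (odd_case u v (t - 1)) (ipc_one u v)
  · -- k = 2 * t + 1
    rw [show k / 2 + 1 = t + 1 by omega, show k = 2 * t + 1 from ht]
    exact odd_case u v t
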